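/- For every α > 0 there exists a sequence (a_n)_{n≥1} of strictly positive real numbers with Σ_{n≥1} a_n² < ∞ satisfying the self-similar coupling conditions c_n a_n a_{n+1} = a_n + c_{n−1} a_{n−1}² for all n ≥ 1 (with the convention a_0 = 0), where c_n = 2^{αn}. -/

import Mathlib

open Set Filter Topology

namespace Stmt5



noncomputable def Y (G s : ℝ) : ℕ → ℝ
  | 0 => 0
  | 1 => s
  | n + 2 => 1 + G * Y G s n ^ 2 / Y G s (n + 1)

lemma Y_zero (G s : ℝ) : Y G s 0 = 0 := rfl
lemma Y_one (G s : ℝ) : Y G s 1 = s := rfl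
lemma Y_add_two (G s : ℝ) (n : ℕ) :
    Y G s (n + 2) = 1 + G * Y G s n ^ 2 / Y G s (n + 1) := by rw [Y]

lemma Y_two (G s : ℝ) : Y G s 2 = 1 := by
  rw [show (2:ℕ) = 0 + 2 from rfl, Y_add_two]
  simp [Y_zero]

lemma Ypos (G s : ℝ) (hG : 0 < G) (hs : 0 < s) : ∀ n, 0 < Y G s (n + 1) := by
  intro n
  induction n with
  | zero => simpa [Y_one] using hs
  | succ m ih =>
    rw [show m + 1 + 1 = m + 2 from rfl, Y_add_two]
    have : 0 ≤ G * Y G s m ^ 2 / Y G s (m + 1) :=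
      div_nonneg (mul_nonneg hG.le (sq_nonneg _)) ih.le
    linarith

lemma Yge1 (G s : ℝ) (hG : 0 < G) (hs : 0 < s) : ∀ n, 1 ≤ Y G s (n + 2) := by
  intro n
  rw [Y_add_two]
  have : 0 ≤ G * Y G s n ^ 2 / Y G s (n + 1) :=
    div_nonneg (mul_nonneg hG.le (sq_nonneg _)) (Ypos G s hG hs n).le
  linarith

lemma Yrec (G s : ℝ) (hG : 0 < G) (hs : 0 < s) (n : ℕ) :
    Y G s (n + 2) * Y G s (n + 1) = Y G s (n + 1) + G * Y G s n ^ 2 := by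
  have h := (Ypos G s hG hs n).ne'
  rw [Y_add_two]
  field_simp

/-- monotonicity in the parameter s : odd indices increase, even indices decrease. -/
lemma Ymono (G : ℝ) (hG : 0 < G) (s s' : ℝ) (hs' : 0 < s') (hss : s' ≤ s) :
    ∀ k : ℕ, Y G s' (2*k+1) ≤ Y G s (2*k+1) ∧ Y G s (2*k+2) ≤ Y G s' (2*k+2) := by
  have hs : 0 < s := lt_of_lt_of_le hs' hss
  intro k
  induction k with
  | zero =>
    constructor
    · simpa [Y_one] using hss
    · rw [show (0:ℕ)*2+2 = 2 by norm_num] at *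
      simp [Y_two]
  | succ m ih =>
    obtain ⟨hodd, heven⟩ := ih
    have hops' : 0 < Y G s' (2*m+1) := Ypos G s' hG hs' (2*m)
    have hops : 0 < Y G s (2*m+1) := Ypos G s hG hs (2*m)
    have heps' : 0 < Y G s' (2*m+2) := Ypos G s' hG hs' (2*m+1)
    have heps : 0 < Y G s (2*m+2) := Ypos G s hG hs (2*m+1)
    have h1 : Y G s' (2*(m+1)+1) ≤ Y G s (2*(m+1)+1) := by
      rw [show 2*(m+1)+1 = (2*m+1) + 2 by ring,
        Y_add_two G s' (2*m+1), Y_add_two G s (2*m+1)]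
      simp only [show 2*m+1+1 = 2*m+2 from by ring]
      have hnum : Y G s' (2*m+1) ^ 2 ≤ Y G s (2*m+1) ^ 2 :=
        pow_le_pow_left₀ hops'.le hodd 2
      have hdiv : G * Y G s' (2*m+1) ^ 2 / Y G s' (2*m+2) ≤
          G * Y G s (2*m+1) ^ 2 / Y G s (2*m+2) :=
        div_le_div₀ (by positivity) (by nlinarith) heps heven
      linarith
    have h2 : Y G s (2*(m+1)+2) ≤ Y G s' (2*(m+1)+2) := by
      rw [show 2*(m+1)+2 = (2*m+2) + 2 by ring,
        Y_add_two G s (2*m+2), Y_add_two G s' (2*m+2)]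
      simp only [show 2*m+2+1 = 2*m+3 from by ring]
      have hop1s' : 0 < Y G s' (2*m+3) := by
        have := Ypos G s' hG hs' (2*m+2); simpa using this
      have h1' : Y G s' (2*m+3) ≤ Y G s (2*m+3) := by
        have := h1
        rw [show 2*(m+1)+1 = 2*m+3 by ring] at this
        exact this
      have hnum : Y G s (2*m+2) ^ 2 ≤ Y G s' (2*m+2) ^ 2 :=
        pow_le_pow_left₀ heps.le heven 2
      have hdiv : G * Y G s (2*m+2) ^ 2 / Y G s (2*m+3) ≤
          G * Y G s' (2*m+2) ^ 2 / Y G s' (2*m+3) :=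
        div_le_div₀ (by positivity) (by nlinarith) hop1s' h1'
      linarith
    exact ⟨h1, h2⟩

lemma Ycont_pair (G : ℝ) (s : ℝ) (hs : 0 < s) (hG : 0 < G) :
    ∀ n, ContinuousAt (fun u => Y G u n) s ∧
      ContinuousAt (fun u => Y G u (n+1)) s := by
  intro n
  induction n with
  | zero =>
    constructor
    · simpa [Y_zero] using continuousAt_const
    · exact (continuousAt_id : ContinuousAt (fun u : ℝ => u) s)
  | succ m ih =>
    obtain ⟨h0, h1⟩ := ih
    refine ⟨h1, ?_⟩
    have hden : Y G s (m+1) ≠ 0 := (Ypos G s hG hs m).ne'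
    have hc : ContinuousAt (fun u => 1 + G * Y G u m ^ 2 / Y G u (m+1)) s :=
      continuousAt_const.add (((continuousAt_const.mul (h0.pow 2)).div h1 hden))
    have : (fun u => Y G u (m+1+1)) = (fun u => 1 + G * Y G u m ^ 2 / Y G u (m+1)) := by
      funext u
      rw [show m+1+1 = m+2 from rfl, Y_add_two]
    rw [this]
    exact hc

lemma Ycont (G : ℝ) (s : ℝ) (hs : 0 < s) (hG : 0 < G) (n : ℕ) :
    ContinuousAt (fun u => Y G u n) s :=
  (Ycont_pair G s hs hG n).1

/-- The trap lemma : a strict decrease propagates two steps later,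
and the middle value rebounds strictly. -/
lemma trap (G s : ℝ) (hG : 1 < G) (hs : 0 < s) (n : ℕ)
    (h : Y G s (n+2) < Y G s (n+1)) :
    Y G s (n+4) < Y G s (n+3) ∧ Y G s (n+2) < Y G s (n+3) := by
  have hG0 : 0 < G := lt_trans one_pos hG
  set e := Y G s (n+1) with he_def
  set o := Y G s (n+2) with ho_def
  have he : 0 < e := Ypos G s hG0 hs n
  have ho : 0 < o := Ypos G s hG0 hs (n+1)
  have hoe : o < e := h
  have h3 : Y G s (n+3) = 1 + G * e^2 / o := by
    rw [show n+3 = (n+1)+2 by ring, Y_add_two G s (n+1)]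
  have h4 : Y G s (n+4) = 1 + G * o^2 / Y G s (n+3) := by
    rw [show n+4 = (n+2)+2 by ring, Y_add_two G s (n+2)]
  -- e < e^2/o
  have hq : e < e^2 / o := by
    rw [lt_div_iff₀ ho]
    nlinarith
  have h3big : 1 + G * e < Y G s (n+3) := by
    rw [h3]
    have h' : G * e < G * e^2 / o := by
      rw [mul_div_assoc]
      exact mul_lt_mul_of_pos_left hq hG0
    linarith
  have h3pos : 0 < Y G s (n+3) := Ypos G s hG0 hs (n+2)
  have hGe : e < G * e := by nlinarith
  have part2 : o < Y G s (n+3) := by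
    have : o < 1 + G * e := by nlinarith
    linarith
  refine ⟨?_, part2⟩
  -- Y(n+4) = 1 + G o^2 / Y(n+3) < 1 + G o^2/(G e) = 1 + o^2/e < 1 + o
  have hGepos : 0 < G * e := by positivity
  have hGelt : G * e < Y G s (n+3) := by linarith
  have hd1 : G * o^2 / Y G s (n+3) < G * o^2 / (G * e) := by
    apply div_lt_div_of_pos_left (by positivity) hGepos hGelt
  have hd2 : G * o^2 / (G * e) = o^2 / e := by
    field_simp
  have hd3 : o^2 / e < o := by
    rw [div_lt_iff₀ he]
    nlinarith
  rw [h4]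
  have : 1 + o < Y G s (n+3) := by nlinarith
  nlinarith

/-- From a strict decrease at an even position the decreases keep propagating. -/
lemma trap_chain (G s : ℝ) (hG : 1 < G) (hs : 0 < s) (m : ℕ)
    (h : Y G s (2*m+3) < Y G s (2*m+2)) :
    ∀ i, Y G s (2*(m+i)+3) < Y G s (2*(m+i)+2) := by
  intro i
  induction i with
  | zero => simpa using h
  | succ j ih =>
    have := (trap G s hG hs (2*(m+j)+1) (by
      have := ih
      rw [show 2*(m+j)+1+2 = 2*(m+j)+3 by ring, show 2*(m+j)+1+1 = 2*(m+j)+2 by ring]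
      exact this)).1
    rw [show 2*(m+j)+1+4 = 2*(m+(j+1))+3 by ring,
        show 2*(m+j)+1+3 = 2*(m+(j+1))+2 by ring] at this
    exact this

/-- consequence : the S-conditions hold strictly beyond the decrease. -/
lemma trap_S (G s : ℝ) (hG : 1 < G) (hs : 0 < s) (m : ℕ)
    (h : Y G s (2*m+3) < Y G s (2*m+2)) :
    ∀ k, m + 1 ≤ k → Y G s (2*k+1) < Y G s (2*k+2) := by
  intro k hk
  obtain ⟨i, rfl⟩ : ∃ i, k = m + 1 + i := ⟨k - (m+1), by omega⟩
  have hdec := trap_chain G s hG hs m h i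
  have := (trap G s hG hs (2*(m+i)+1) (by
    rw [show 2*(m+i)+1+2 = 2*(m+i)+3 by ring, show 2*(m+i)+1+1 = 2*(m+i)+2 by ring]
    exact hdec)).2
  rw [show 2*(m+i)+1+2 = 2*(m+1+i)+1 by ring,
      show 2*(m+i)+1+3 = 2*(m+1+i)+2 by ring] at this
  exact this

/-- the equality-breaking lemma : if an odd value equals the next even value,
then the next S-condition fails strictly. -/
lemma eq_break (G s : ℝ) (hG : 1 < G) (hs : 0 < s) (j : ℕ)
    (h : Y G s (2*j+1) = Y G s (2*j+2)) :
    Y G s (2*j+4) < Y G s (2*j+3) := by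
  have hG0 : 0 < G := lt_trans one_pos hG
  set c := Y G s (2*j+1) with hc_def
  have hc : 0 < c := Ypos G s hG0 hs (2*j)
  have h3 : Y G s (2*j+3) = 1 + G * c := by
    rw [show 2*j+3 = (2*j+1)+2 by ring, Y_add_two G s (2*j+1)]
    rw [show 2*j+1+1 = 2*j+2 by ring, ← h]
    field_simp
    ring
  have h4 : Y G s (2*j+4) = 1 + G * c^2 / (1 + G * c) := by
    rw [show 2*j+4 = (2*j+2)+2 by ring, Y_add_two G s (2*j+2)]
    rw [show 2*j+2+1 = 2*j+3 by ring, h3, ← h]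
  rw [h3, h4]
  have hden : 0 < 1 + G * c := by positivity
  have : G * c^2 / (1 + G*c) < G * c := by
    rw [div_lt_iff₀ hden]
    have key : c < 1 + G*c := by nlinarith
    have := mul_lt_mul_of_pos_left key (show (0:ℝ) < G*c by positivity)
    nlinarith
  linarith



/-- the shooting set -/
def Sset (G : ℝ) : Set ℝ := {s | 0 < s ∧ ∀ k : ℕ, Y G s (2*k+1) ≤ Y G s (2*k+2)}

lemma Y_three (G s : ℝ) : Y G s 3 = 1 + G * s^2 := by
  have := Y_add_two G s 1
  rw [Y_one, Y_two] at this
  simpa using this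

lemma Y_four (G s : ℝ) (h3 : Y G s 3 ≠ 0) : Y G s 4 = 1 + G / Y G s 3 := by
  have := Y_add_two G s 2
  rw [Y_two] at this
  simpa using this

/-- the small parameter is in S. -/
lemma sigma_mem (G : ℝ) (hG : 1 < G) : (1/(4*G)) ∈ Sset G := by
  have hG0 : 0 < G := lt_trans one_pos hG
  set s := 1/(4*G) with hs_def
  have hs : 0 < s := by positivity
  have hs1 : s < 1 := by
    rw [hs_def, div_lt_one (by positivity)]
    nlinarith
  have h3 : Y G s 3 = 1 + G * s^2 := Y_three G s
  have hGs2 : G * s^2 ≤ 1/16 := by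
    have he : G * s^2 = 1/(16*G) := by
      rw [hs_def]; field_simp; ring
    rw [he, div_le_div_iff₀ (by positivity) (by norm_num)]
    nlinarith
  have h3lb : 1 ≤ Y G s 3 := by rw [h3]; nlinarith [mul_nonneg hG0.le (sq_nonneg s)]
  have h3ub : Y G s 3 ≤ 17/16 := by rw [h3]; linarith
  have h3pos : 0 < Y G s 3 := by linarith
  have h4 : Y G s 4 = 1 + G / Y G s 3 := Y_four G s h3pos.ne'
  have h4lb : 1 + 16*G/17 ≤ Y G s 4 := by
    rw [h4]
    have : 16*G/17 ≤ G / Y G s 3 := by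
      rw [div_le_div_iff₀ (by norm_num) h3pos]
      nlinarith
    linarith
  -- the decrease at 4 : Y5 < Y4  ⟺  Y3^3 < Y4
  have h5 : Y G s 5 = 1 + G * Y G s 3 ^2 / Y G s 4 := by
    have := Y_add_two G s 3
    norm_num at this
    exact this
  have h4pos : 0 < Y G s 4 := by nlinarith
  have hdec : Y G s 5 < Y G s 4 := by
    rw [h5]
    have hcube : Y G s 3 ^ 3 < Y G s 4 := by
      have : Y G s 3 ^3 ≤ (17/16)^3 := by
        apply pow_le_pow_left₀ h3pos.le h3ub
      have h2G : (17:ℝ)/16 ^3 < 1 + 16*G/17 := by nlinarith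
      calc Y G s 3 ^3 ≤ (17/16)^3 := this
        _ < 1 + 16*G/17 := by nlinarith
        _ ≤ Y G s 4 := h4lb
    have : G * Y G s 3 ^2 / Y G s 4 < G / Y G s 3 := by
      rw [div_lt_div_iff₀ h4pos h3pos]
      have expand : Y G s 3 ^3 = Y G s 3 ^2 * Y G s 3 := by ring
      calc G * Y G s 3 ^2 * Y G s 3 = G * (Y G s 3^3) := by ring
        _ < G * Y G s 4 := by
            apply mul_lt_mul_of_pos_left _ hG0
            rw [h4] at hcube ⊢
            exact hcube
    linarith
  refine ⟨hs, ?_⟩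
  intro k
  match k with
  | 0 =>
    rw [show 2*0+1 = 1 by norm_num, show 2*0+2 = 2 by norm_num, Y_one, Y_two]
    linarith
  | 1 =>
    rw [show 2*1+1 = 3 by norm_num, show 2*1+2 = 4 by norm_num]
    calc Y G s 3 ≤ 17/16 := h3ub
      _ ≤ 1 + 16*G/17 := by nlinarith
      _ ≤ Y G s 4 := h4lb
  | (k+2) =>
    have := trap_S G s hG hs 1 (by
      rw [show 2*1+3 = 5 by norm_num, show 2*1+2 = 4 by norm_num]; exact hdec) (k+2) (by omega)
    exact this.le

/-- membership in S forces s ≤ 1. -/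
lemma S_le_one (G : ℝ) (hG : 1 < G) {s : ℝ} (hs : s ∈ Sset G) : s ≤ 1 := by
  have hG0 : 0 < G := lt_trans one_pos hG
  obtain ⟨hs0, hcond⟩ := hs
  have h1 := hcond 1
  rw [show 2*1+1 = 3 by norm_num, show 2*1+2 = 4 by norm_num] at h1
  have h3 : Y G s 3 = 1 + G * s^2 := Y_three G s
  have h3pos : 0 < Y G s 3 := by rw [h3]; nlinarith [mul_nonneg hG0.le (sq_nonneg s)]
  have h4 : Y G s 4 = 1 + G / Y G s 3 := Y_four G s h3pos.ne'
  rw [h3, h4] at h1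
  -- 1 + G s² ≤ 1 + G / y₃  ⟹  s² ≤ 1/y₃ ≤ 1
  have h3ge1 : 1 ≤ Y G s 3 := by rw [h3]; nlinarith [mul_nonneg hG0.le (sq_nonneg s)]
  have : G * s^2 ≤ G / Y G s 3 := by linarith
  have hle : G / Y G s 3 ≤ G := by
    rw [div_le_iff₀ (by rw [h3] at h3pos ⊢; linarith [h3pos])]
    nlinarith [h3ge1, h3]
  nlinarith [sq_nonneg (s-1), sq_nonneg s]


noncomputable def sstar (G : ℝ) : ℝ := sSup (Sset G)

lemma S_bdd (G : ℝ) (hG : 1 < G) : BddAbove (Sset G) := ⟨1, fun s hs => S_le_one G hG hs⟩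

lemma S_ne (G : ℝ) (hG : 1 < G) : (Sset G).Nonempty := ⟨_, sigma_mem G hG⟩

lemma sstar_pos (G : ℝ) (hG : 1 < G) : 0 < sstar G := by
  have h := le_csSup (S_bdd G hG) (sigma_mem G hG)
  have : (0:ℝ) < 1/(4*G) := by positivity
  exact lt_of_lt_of_le this h

lemma sstar_mem (G : ℝ) (hG : 1 < G) : sstar G ∈ Sset G := by
  have hpos := sstar_pos G hG
  refine ⟨hpos, fun k => ?_⟩
  -- every s < s* is in S (downward closed), take limits from the left
  have hdown : ∀ s ∈ Ioo (0:ℝ) (sstar G),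
      Y G s (2*k+1) ≤ Y G s (2*k+2) := by
    rintro s ⟨hs0, hss⟩
    obtain ⟨u, huS, hu⟩ := exists_lt_of_lt_csSup (S_ne G hG) hss
    have := Ymono G (lt_trans one_pos hG) u s hs0 hu.le k
    exact le_trans this.1 (le_trans (huS.2 k) this.2)
  have hne : (𝓝[<] (sstar G)).NeBot := nhdsLT_neBot _
  have hmem : Ioo (0:ℝ) (sstar G) ∈ 𝓝[<] (sstar G) :=
    Ioo_mem_nhdsLT_of_mem ⟨hpos, le_refl _⟩
  have t1 : Tendsto (fun u => Y G u (2*k+1)) (𝓝[<] sstar G) (𝓝 (Y G (sstar G) (2*k+1))) :=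
    ((Ycont G _ hpos (lt_trans one_pos hG) (2*k+1)).continuousWithinAt)
  have t2 : Tendsto (fun u => Y G u (2*k+2)) (𝓝[<] sstar G) (𝓝 (Y G (sstar G) (2*k+2))) :=
    ((Ycont G _ hpos (lt_trans one_pos hG) (2*k+2)).continuousWithinAt)
  refine le_of_tendsto_of_tendsto t1 t2 ?_
  filter_upwards [hmem] with s hs
  exact hdown s hs

/-- F1 strict : at s* all odd values are strictly below the next even one. -/
lemma sstar_strict (G : ℝ) (hG : 1 < G) : ∀ j : ℕ, Y G (sstar G) (2*j+1) < Y G (sstar G) (2*j+2) := by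
  intro j
  obtain ⟨hp, hc⟩ := sstar_mem G hG
  rcases lt_or_eq_of_le (hc j) with h | h
  · exact h
  · exfalso
    have hbreak := eq_break G _ hG hp j h
    have := hc (j+1)
    rw [show 2*(j+1)+1 = 2*j+3 by ring, show 2*(j+1)+2 = 2*j+4 by ring] at this
    linarith

/-- F2 : at s* there is never a strict decrease from even to the next odd. -/
lemma sstar_even_le (G : ℝ) (hG : 1 < G) : ∀ k : ℕ, Y G (sstar G) (2*k+2) ≤ Y G (sstar G) (2*k+3) := by
  intro k
  by_contra hlt
  push_neg at hlt
  set t := sstar G with ht_def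
  have hp : 0 < t := sstar_pos G hG
  have hG0 : (0:ℝ) < G := lt_trans one_pos hG
  -- eventually, near t : positivity, the strict conditions up to k, and the decrease
  have ev1 : ∀ᶠ u in 𝓝 t, 0 < u := eventually_gt_nhds hp
  have ev2 : ∀ᶠ u in 𝓝 t, ∀ j ∈ Finset.range (k+1),
      Y G u (2*j+1) < Y G u (2*j+2) := by
    rw [Finset.eventually_all]
    intro j _
    exact (Ycont G t hp hG0 (2*j+1)).eventually_lt (Ycont G t hp hG0 (2*j+2))
      (sstar_strict G hG j)
  have ev3 : ∀ᶠ u in 𝓝 t, Y G u (2*k+3) < Y G u (2*k+2) :=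
    (Ycont G t hp hG0 (2*k+3)).eventually_lt (Ycont G t hp hG0 (2*k+2)) hlt
  have hne : (𝓝[>] t).NeBot := nhdsGT_neBot _
  have evall := (ev1.and (ev2.and ev3)).filter_mono (nhdsWithin_le_nhds (s := Ioi t))
  obtain ⟨u, ⟨hu0, hu2, hu3⟩, hut⟩ := (evall.and self_mem_nhdsWithin).exists
  -- u ∈ S and u > t = sSup S : contradiction
  have huS : u ∈ Sset G := by
    refine ⟨hu0, fun j => ?_⟩
    rcases le_or_gt j k with hjk | hjk
    · exact (hu2 j (Finset.mem_range.mpr (by omega))).le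
    · exact (trap_S G u hG hu0 k hu3 j (by omega)).le
  have hle : u ≤ t := le_csSup (S_bdd G hG) huS
  exact absurd (lt_of_lt_of_le hut hle) (lt_irrefl _)

/-- the orbit at s* is monotone. -/
lemma sstar_mono (G : ℝ) (hG : 1 < G) : ∀ n : ℕ, 1 ≤ n → Y G (sstar G) n ≤ Y G (sstar G) (n+1) := by
  intro n hn
  rcases Nat.even_or_odd n with ⟨m, hm⟩ | ⟨m, hm⟩
  · -- n = 2m, m ≥ 1 : n = 2(m-1)+2
    obtain ⟨l, hl⟩ : ∃ l, m = l + 1 := ⟨m - 1, by omega⟩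
    have := sstar_even_le G hG l
    rw [show 2*l+2 = n by omega, show 2*l+3 = n+1 by omega] at this
    exact this
  · have := (sstar_strict G hG m).le
    rw [show 2*m+1 = n by omega, show 2*m+2 = n+1 by omega] at this
    exact this


section Z
variable (G : ℝ) (z : ℕ → ℝ)

/-- abstract interface for the monotone orbit -/
structure MonOrbit (G : ℝ) (z : ℕ → ℝ) : Prop where
  hG : 1 < G
  z1 : 0 < z 1
  z2 : z 2 = 1
  zpos : ∀ n, 0 < z (n+1)
  zrec : ∀ n, z (n+2) * z (n+1) = z (n+1) + G * z n ^ 2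
  zmono : ∀ n, 1 ≤ n → z n ≤ z (n+1)

variable {G z}

lemma MonOrbit.zmono' (h : MonOrbit G z) :
    ∀ m n, 1 ≤ m → m ≤ n → z m ≤ z n := by
  intro m n h1 hmn
  induction n with
  | zero => omega
  | succ k ih =>
    rcases Nat.lt_or_ge m (k+1) with hlt | hge
    · have hk : 1 ≤ k := by omega
      exact le_trans (ih (by omega)) (h.zmono k hk)
    · have : m = k+1 := by omega
      subst this
      exact le_refl _

lemma MonOrbit.zge1 (h : MonOrbit G z) : ∀ n, 1 ≤ z (n+2) := by
  intro n
  have := h.zmono' 2 (n+2) (by norm_num) (by omega)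
  rw [h.z2] at this
  exact this

lemma MonOrbit.Lstep (h : MonOrbit G z) :
    ∀ m, 1 ≤ m → G * (z m * z (m+1)) ≤ z (m+2) * z (m+3) := by
  intro m hm
  have hrec := h.zrec (m+1)
  have h1 : G * z (m+1)^2 ≤ z (m+3) * z (m+2) := by
    rw [show m+1+2 = m+3 by ring, show m+1+1 = m+2 by ring] at hrec
    nlinarith [h.zpos (m+1)]
  have h2 : G * (z m * z (m+1)) ≤ G * z (m+1)^2 := by
    have := h.zmono m hm
    have hzm : 0 < z m := by
      obtain ⟨l, hl⟩ : ∃ l, m = l + 1 := ⟨m-1, by omega⟩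
      subst hl; exact h.zpos l
    have hG0 : 0 < G := lt_trans one_pos h.hG
    have h3 : z m * z (m+1) ≤ z (m+1) * z (m+1) :=
      mul_le_mul_of_nonneg_right this (h.zpos m).le
    have := mul_le_mul_of_nonneg_left h3 hG0.le
    nlinarith
  nlinarith


/-- geometric growth of consecutive products. -/
lemma MonOrbit.Lge (h : MonOrbit G z) (om : ℝ) (hom : 1 < om) (homG : om^4 = G)
    (s0 : ℝ) (hs0a : s0 ≤ z 1) (hs0b : s0 * om^2 ≤ 1) (hs0pos : 0 < s0) :
    ∀ j, s0 * (om^2)^j ≤ z (j+1) * z (j+2) := by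
  intro j
  induction j using Nat.twoStepInduction with
  | zero =>
    have : z 1 * z 2 = z 1 := by rw [h.z2]; ring
    rw [this]
    simpa using hs0a
  | one =>
    have h23 : (1:ℝ) ≤ z 2 * z 3 := by
      rw [h.z2, one_mul]
      exact h.zge1 1
    calc s0 * (om^2)^1 = s0 * om^2 := by ring
      _ ≤ 1 := hs0b
      _ ≤ z 2 * z 3 := h23
  | more j ih _ =>
    have hstep := h.Lstep (j+1) (by omega)
    have : G * (s0 * (om^2)^j) ≤ G * (z (j+1) * z (j+2)) := by
      have hG0 : 0 < G := lt_trans one_pos h.hG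
      exact mul_le_mul_of_nonneg_left ih hG0.le
    calc s0 * (om^2)^(j+2) = G * (s0 * (om^2)^j) := by rw [← homG]; ring
      _ ≤ G * (z (j+1) * z (j+2)) := this
      _ ≤ z (j+1+2) * z (j+1+3) := by
          rw [show j+1+1 = j+2 by ring] at hstep
          exact hstep
      _ = z (j+2+1) * z (j+2+2) := by ring_nf

/-- pointwise geometric lower bound. -/
lemma MonOrbit.zge (h : MonOrbit G z) (om : ℝ) (hom : 1 < om) (homG : om^4 = G)
    (s0 : ℝ) (hs0a : s0 ≤ z 1) (hs0b : s0 * om^2 ≤ 1) (hs0pos : 0 < s0)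
    (c0 : ℝ) (hc0 : c0^2 = s0) (hc0pos : 0 < c0) :
    ∀ j, c0 * om^j ≤ z (j+2) := by
  intro j
  have hL := h.Lge om hom homG s0 hs0a hs0b hs0pos j
  have hsq : (c0 * om^j)^2 ≤ z (j+2)^2 := by
    have e1 : (c0 * om^j)^2 = s0 * (om^2)^j := by
      rw [← hc0]; ring
    have e2 : z (j+1) * z (j+2) ≤ z (j+2)^2 := by
      have := h.zmono (j+1) (by omega)
      nlinarith [h.zpos j, h.zpos (j+1)]
    calc (c0 * om^j)^2 = s0 * (om^2)^j := e1
      _ ≤ z (j+1) * z (j+2) := hL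
      _ ≤ z (j+2)^2 := e2
  have hnn : (0:ℝ) ≤ c0 * om^j := by positivity
  exact le_of_pow_le_pow_left₀ two_ne_zero (h.zpos (j+1)).le hsq

/-- the cap : squared one-step ratio is at most 2G once values are ≥ 2. -/
lemma MonOrbit.cap (h : MonOrbit G z) (m : ℕ) (hm : 1 ≤ m) (h2 : 2 ≤ z (m+1)) :
    z (m+1)^2 ≤ 2 * G * z m ^2 := by
  have hrec := h.zrec m
  have hmono := h.zmono (m+1) (by omega)
  have hpos1 := h.zpos m
  have hpos2 := h.zpos (m+1)
  -- z_{m+1}^2 ≤ z_{m+2} z_{m+1} = z_{m+1} + G z_m^2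
  have hq : z (m+1)^2 ≤ z (m+1) + G * z m ^2 := by nlinarith
  nlinarith

/-- the key step inequality for Q. -/
lemma MonOrbit.Qstep (h : MonOrbit G z) (m : ℕ) (hm : 1 ≤ m) (h2 : 2 ≤ z (m+2)) :
    z (m+2)^2 * z (m+3) ≤ G * (z (m+1)^2 * z (m+2)) * (1 + 2 / z (m+2)) := by
  have hrec := h.zrec (m+1)
  rw [show m+1+2 = m+3 by ring, show m+1+1 = m+2 by ring] at hrec
  have hcap := h.cap (m+1) (by omega) h2
  have hp2 := h.zpos (m+1)
  have hp1 := h.zpos m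
  have hp3 := h.zpos (m+2)
  -- z_{m+3} z_{m+2}^2 = z_{m+2}^2 + G z_{m+1}^2 z_{m+2}
  have key : z (m+2)^2 * z (m+3) = z (m+2)^2 + G * z (m+1)^2 * z (m+2) := by
    nlinarith [hrec]
  have expand : G * (z (m+1)^2 * z (m+2)) * (1 + 2 / z (m+2))
      = G * z (m+1)^2 * z (m+2) + 2 * G * z (m+1)^2 := by
    field_simp
  rw [key, expand]
  linarith [hcap]


lemma geo_le (r : ℝ) (h0 : 0 ≤ r) (h1 : r < 1) (d : ℕ) :
    ∑ i ∈ Finset.range d, r^i ≤ (1-r)⁻¹ := by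
  have hr : r ≠ 1 := ne_of_lt h1
  rw [geom_sum_eq hr]
  rw [div_le_iff_of_neg (by linarith)]
  have h2 : 0 ≤ r^d := pow_nonneg h0 d
  have h3 : (1-r)⁻¹ * (1-r) = 1 := inv_mul_cancel₀ (by linarith)
  nlinarith

/-- main upper bound by induction. -/
lemma MonOrbit.Qbound (h : MonOrbit G z) (N : ℕ) (hN : 1 ≤ N)
    (h2N : ∀ n, N ≤ n → 2 ≤ z n) :
    ∀ d, z (N+d+1)^2 * z (N+d+2) ≤
      (z (N+1)^2 * z (N+2)) * G^d *
        Real.exp (∑ i ∈ Finset.range d, 2 / z (N+i+2)) := by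
  intro d
  induction d with
  | zero => simp
  | succ m ih =>
    have hG0 : 0 < G := lt_trans one_pos h.hG
    have hstep := h.Qstep (N+m) (by omega) (h2N (N+m+2) (by omega))
    have hb : 1 + 2 / z (N+m+2) ≤ Real.exp (2 / z (N+m+2)) := by
      have := Real.add_one_le_exp (2 / z (N+m+2))
      linarith
    have hQpos : 0 < z (N+m+1)^2 * z (N+m+2) := by
      have := h.zpos (N+m)
      have := h.zpos (N+m+1)
      positivity
    have hexp_pos : (0:ℝ) < Real.exp (∑ i ∈ Finset.range m, 2 / z (N+i+2)) :=
      Real.exp_pos _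
    have h1 : z (N+(m+1)+1)^2 * z (N+(m+1)+2)
        ≤ G * (z (N+m+1)^2 * z (N+m+2)) * (1 + 2 / z (N+m+2)) := by
      rw [show N+(m+1)+1 = (N+m)+2 by ring, show N+(m+1)+2 = (N+m)+3 by ring]
      exact hstep
    have h2' : G * (z (N+m+1)^2 * z (N+m+2)) * (1 + 2 / z (N+m+2))
        ≤ G * ((z (N+1)^2 * z (N+2)) * G^m *
            Real.exp (∑ i ∈ Finset.range m, 2 / z (N+i+2))) * Real.exp (2 / z (N+m+2)) := by
      have hfac : 0 ≤ 1 + 2 / z (N+m+2) := by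
        have hz : 0 < z (N+m+2) := h.zpos (N+m+1)
        have : 0 < 2 / z (N+m+2) := by positivity
        linarith
      apply mul_le_mul
      · exact mul_le_mul_of_nonneg_left ih hG0.le
      · exact hb
      · exact hfac
      · exact mul_nonneg hG0.le (mul_nonneg (mul_nonneg
          (mul_nonneg (sq_nonneg _) (h.zpos (N+1)).le) (pow_nonneg hG0.le m))
          (Real.exp_pos _).le)
    calc z (N+(m+1)+1)^2 * z (N+(m+1)+2)
        ≤ G * (z (N+m+1)^2 * z (N+m+2)) * (1 + 2 / z (N+m+2)) := h1
      _ ≤ G * ((z (N+1)^2 * z (N+2)) * G^m *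
            Real.exp (∑ i ∈ Finset.range m, 2 / z (N+i+2))) * Real.exp (2 / z (N+m+2)) := h2'
      _ = (z (N+1)^2 * z (N+2)) * G^(m+1) *
            (Real.exp (∑ i ∈ Finset.range m, 2 / z (N+i+2)) * Real.exp (2 / z (N+m+2))) := by
            ring
      _ = (z (N+1)^2 * z (N+2)) * G^(m+1) *
            Real.exp (∑ i ∈ Finset.range (m+1), 2 / z (N+i+2)) := by
            rw [← Real.exp_add, Finset.sum_range_succ]


/-- the decisive summability result for a monotone orbit. -/
lemma MonOrbit.summable (h : MonOrbit G z) :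
    Summable (fun m => (G⁻¹)^m * z (m+1)^2) := by
  have hG1 := h.hG
  have hG0 : (0:ℝ) < G := lt_trans one_pos hG1
  -- the fourth root of G
  set β := Real.sqrt G with hβ_def
  set om := Real.sqrt β with hom_def
  have hβ1 : 1 < β := by
    rw [hβ_def, show (1:ℝ) = Real.sqrt 1 by simp]
    exact Real.sqrt_lt_sqrt (by norm_num) hG1
  have hβ0 : 0 < β := lt_trans one_pos hβ1
  have hom1 : 1 < om := by
    rw [hom_def, show (1:ℝ) = Real.sqrt 1 by simp]
    exact Real.sqrt_lt_sqrt (by norm_num) hβ1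
  have hom0 : 0 < om := lt_trans one_pos hom1
  have homG : om^4 = G := by
    have h1 : om^2 = β := by
      rw [hom_def, sq, Real.mul_self_sqrt hβ0.le]
    have h2 : β^2 = G := by
      rw [hβ_def, sq, Real.mul_self_sqrt hG0.le]
    calc om^4 = (om^2)^2 := by ring
      _ = β^2 := by rw [h1]
      _ = G := h2
  -- the seed
  set s0 := min (z 1) (1/om^2) with hs0_def
  have hs0pos : 0 < s0 := lt_min h.z1 (by positivity)
  have hs0a : s0 ≤ z 1 := min_le_left _ _
  have hs0b : s0 * om^2 ≤ 1 := by
    have : s0 ≤ 1/om^2 := min_le_right _ _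
    rw [le_div_iff₀ (by positivity)] at this
    linarith
  set c0 := Real.sqrt s0 with hc0_def
  have hc0pos : 0 < c0 := Real.sqrt_pos.mpr hs0pos
  have hc0sq : c0^2 = s0 := by
    rw [hc0_def, sq, Real.mul_self_sqrt hs0pos.le]
  have hzge := h.zge om hom1 homG s0 hs0a hs0b hs0pos c0 hc0sq hc0pos
  -- choose N with z N > 2
  obtain ⟨k0, hk0⟩ := pow_unbounded_of_one_lt (2/c0) hom1
  set N := k0 + 2 with hN_def
  have hzN : 2 < z N := by
    have h1 : c0 * om^k0 ≤ z (k0+2) := hzge k0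
    have h2 : 2 < c0 * om^k0 := by
      rw [div_lt_iff₀ hc0pos] at hk0
      nlinarith
    rw [hN_def]; linarith
  have h2N : ∀ n, N ≤ n → 2 ≤ z n := by
    intro n hn
    have := h.zmono' N n (by omega) hn
    linarith
  have hQb := h.Qbound N (by omega) h2N
  -- bound the exponential sums uniformly
  set V := (2/c0) * (1 - om⁻¹)⁻¹ with hV_def
  have hsumV : ∀ d, (∑ i ∈ Finset.range d, 2 / z (N+i+2)) ≤ V := by
    intro d
    have hterm : ∀ i, 2 / z (N+i+2) ≤ (2/c0) * (om⁻¹)^i := by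
      intro i
      have hlow : c0 * om^(N+i) ≤ z (N+i+2) := hzge (N+i)
      have hlowpos : 0 < c0 * om^(N+i) := by positivity
      have h1 : 2 / z (N+i+2) ≤ 2 / (c0 * om^(N+i)) := by
        apply div_le_div_of_nonneg_left (by norm_num) hlowpos hlow
      have h2 : 2 / (c0 * om^(N+i)) ≤ 2 / (c0 * om^i) := by
        apply div_le_div_of_nonneg_left (by norm_num) (by positivity)
        have : om^i ≤ om^(N+i) := pow_le_pow_right₀ hom1.le (by omega)
        nlinarith
      have h3 : 2 / (c0 * om^i) = (2/c0) * (om⁻¹)^i := by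
        rw [inv_pow]
        field_simp
      linarith
    calc (∑ i ∈ Finset.range d, 2 / z (N+i+2))
        ≤ ∑ i ∈ Finset.range d, (2/c0) * (om⁻¹)^i :=
          Finset.sum_le_sum (fun i _ => hterm i)
      _ = (2/c0) * ∑ i ∈ Finset.range d, (om⁻¹)^i := by rw [Finset.mul_sum]
      _ ≤ (2/c0) * (1 - om⁻¹)⁻¹ := by
          apply mul_le_mul_of_nonneg_left _ (by positivity)
          exact geo_le _ (by positivity) (inv_lt_one_of_one_lt₀ hom1) d
  set D := (z (N+1)^2 * z (N+2)) * Real.exp V with hD_def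
  have hDpos : 0 < D := by
    have := h.zpos N
    have := h.zpos (N+1)
    positivity
  have hQfinal : ∀ d, z (N+d+1)^2 * z (N+d+2) ≤ D * G^d := by
    intro d
    calc z (N+d+1)^2 * z (N+d+2)
        ≤ (z (N+1)^2 * z (N+2)) * G^d *
            Real.exp (∑ i ∈ Finset.range d, 2 / z (N+i+2)) := hQb d
      _ ≤ (z (N+1)^2 * z (N+2)) * G^d * Real.exp V := by
          apply mul_le_mul_of_nonneg_left (Real.exp_le_exp.mpr (hsumV d))
          have := h.zpos N
          have := h.zpos (N+1)
          positivity
      _ = D * G^d := by rw [hD_def]; ring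
  have hzcube : ∀ d, z (N+d+1)^3 ≤ D * G^d := by
    intro d
    have h1 : z (N+d+1) ≤ z (N+d+2) := h.zmono (N+d+1) (by omega)
    have h2 : 0 < z (N+d+1) := h.zpos (N+d)
    calc z (N+d+1)^3 = z (N+d+1)^2 * z (N+d+1) := by ring
      _ ≤ z (N+d+1)^2 * z (N+d+2) := by nlinarith
      _ ≤ D * G^d := hQfinal d
  -- now the term bound
  set γ := (G⁻¹) ^ ((1:ℝ)/3) with hγ_def
  have hGinv0 : (0:ℝ) ≤ G⁻¹ := by positivity
  have hγ0 : 0 ≤ γ := Real.rpow_nonneg hGinv0 _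
  have hγ3 : γ^(3:ℕ) = G⁻¹ := by
    rw [hγ_def, ← Real.rpow_natCast ((G⁻¹) ^ ((1:ℝ)/3)) 3, ← Real.rpow_mul hGinv0]
    norm_num
  have hγ1 : γ < 1 := by
    rw [hγ_def]
    apply Real.rpow_lt_one hGinv0 (inv_lt_one_of_one_lt₀ hG1) (by norm_num)
  set X := D^2 * (G⁻¹)^(2*N) with hX_def
  have hXpos : 0 < X := by positivity
  set C := X ^ ((1:ℝ)/3) with hC_def
  have hC0 : 0 ≤ C := Real.rpow_nonneg hXpos.le _
  have hC3 : C^(3:ℕ) = X := by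
    rw [hC_def, ← Real.rpow_natCast (X ^ ((1:ℝ)/3)) 3, ← Real.rpow_mul hXpos.le]
    norm_num
  have hterm : ∀ d, (G⁻¹)^(N+d) * z (N+d+1)^2 ≤ C * γ^(N+d) := by
    intro d
    have hz0 : 0 < z (N+d+1) := h.zpos (N+d)
    have hcube : ((G⁻¹)^(N+d) * z (N+d+1)^2)^(3:ℕ) ≤ (C * γ^(N+d))^(3:ℕ) := by
      have e1 : ((G⁻¹)^(N+d) * z (N+d+1)^2)^(3:ℕ)
          = (G⁻¹)^(3*(N+d)) * (z (N+d+1)^3)^2 := by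
        rw [← pow_mul]
        ring
      have e2 : (C * γ^(N+d))^(3:ℕ) = X * (G⁻¹)^(N+d) := by
        calc (C * γ^(N+d))^(3:ℕ) = C^(3:ℕ) * (γ^(3:ℕ))^(N+d) := by ring
          _ = X * (G⁻¹)^(N+d) := by rw [hC3, hγ3]
      rw [e1, e2, hX_def]
      have h6 : (z (N+d+1)^3)^2 ≤ (D * G^d)^2 := by
        apply pow_le_pow_left₀ (by positivity) (hzcube d)
      have hfact : (G⁻¹)^(3*(N+d)) * (D*G^d)^2 = D^2 * (G⁻¹)^(2*N) * (G⁻¹)^(N+d) := by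
        have hGne : G ≠ 0 := hG0.ne'
        simp only [inv_pow]
        field_simp
        ring
      calc (G⁻¹)^(3*(N+d)) * (z (N+d+1)^3)^2
          ≤ (G⁻¹)^(3*(N+d)) * (D*G^d)^2 := by
            apply mul_le_mul_of_nonneg_left h6 (by positivity)
        _ = D^2 * (G⁻¹)^(2*N) * (G⁻¹)^(N+d) := hfact
    exact le_of_pow_le_pow_left₀ (by norm_num) (by positivity) hcube
  -- assemble summability
  have hnn : ∀ m, 0 ≤ (G⁻¹)^m * z (m+1)^2 := by
    intro m
    positivity
  rw [← summable_nat_add_iff N]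
  refine Summable.of_nonneg_of_le (fun d => hnn (d+N)) (fun d => ?_)
    ((summable_geometric_of_lt_one hγ0 hγ1).mul_left (C * γ^N))
  have hd := hterm d
  calc (G⁻¹)^(d+N) * z (d+N+1)^2 ≤ C * γ^(N+d) := by
        rw [show d+N+1 = N+d+1 by ring, show d+N = N+d by ring]
        exact hd
    _ = (C * γ^N) * γ^d := by ring

end Z

/-- For every `α > 0` there exists a sequence `(a_n)_{n≥1}` of strictly
positive reals with `Σ_{n≥1} a_n² < ∞` satisfying the self-similar coupling conditions
`c_n a_n a_{n+1} = a_n + c_{n−1} a_{n−1}²` for all `n ≥ 1` (with `a_0 = 0`), where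
`c_n = 2^(αn)`. -/
theorem self_similar_exists (α : ℝ) (hα : 0 < α) :
    ∃ a : ℕ → ℝ,
      a 0 = 0 ∧
      (∀ n : ℕ, 1 ≤ n → 0 < a n) ∧
      (Summable fun n => (a (n + 1)) ^ 2) ∧
      (∀ n : ℕ, 1 ≤ n →
        (2 : ℝ) ^ (α * (n : ℝ)) * a n * a (n + 1)
          = a n + (2 : ℝ) ^ (α * ((n : ℝ) - 1)) * (a (n - 1)) ^ 2) := by
  set G : ℝ := (2:ℝ) ^ (2*α) with hG_def
  have hG : 1 < G := by
    rw [hG_def]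
    apply Real.one_lt_rpow_iff_of_pos two_pos |>.mpr
    exact Or.inl ⟨one_lt_two, by linarith⟩
  have hG0 : 0 < G := lt_trans one_pos hG
  set s := sstar G with hs_def
  have hs : 0 < s := sstar_pos G hG
  set z : ℕ → ℝ := Y G s with hz_def
  have mon : MonOrbit G z := by
    refine ⟨hG, ?_, Y_two G s, Ypos G s hG0 hs, Yrec G s hG0 hs, sstar_mono G hG⟩
    rw [hz_def, Y_one]; exact hs
  -- the sequence
  refine ⟨fun n => (2:ℝ)^(α*(1-(n:ℝ))) * z n, ?_, ?_, ?_, ?_⟩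
  · simp [hz_def, Y_zero]
  · intro n hn
    obtain ⟨m, rfl⟩ : ∃ m, n = m + 1 := ⟨n-1, by omega⟩
    have := mon.zpos m
    positivity
  · -- summability
    have hsum := mon.summable
    have hptw : ∀ m : ℕ, ((2:ℝ)^(α*(1-((m:ℝ)+1))) * z (m+1))^2
        = (G⁻¹)^m * z (m+1)^2 := by
      intro m
      have e1 : ((2:ℝ)^(α*(1-((m:ℝ)+1))))^(2:ℕ) = (G⁻¹)^m := by
        rw [← Real.rpow_natCast ((2:ℝ)^(α*(1-((m:ℝ)+1)))) 2,
          ← Real.rpow_mul (by norm_num : (0:ℝ) ≤ 2)]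
        have e2 : (G⁻¹) = (2:ℝ)^(-(2*α)) := by
          rw [hG_def, ← Real.rpow_neg (by norm_num : (0:ℝ) ≤ 2)]
        rw [e2, ← Real.rpow_natCast ((2:ℝ)^(-(2*α))) m,
          ← Real.rpow_mul (by norm_num : (0:ℝ) ≤ 2)]
        congr 1
        push_cast
        ring
      calc ((2:ℝ)^(α*(1-((m:ℝ)+1))) * z (m+1))^2
          = ((2:ℝ)^(α*(1-((m:ℝ)+1))))^(2:ℕ) * z (m+1)^2 := by ring
        _ = (G⁻¹)^m * z (m+1)^2 := by rw [e1]
    apply Summable.congr hsum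
    intro m
    rw [← hptw m]
    push_cast
    ring_nf
  · -- the identity
    intro n hn
    obtain ⟨m, rfl⟩ : ∃ m, n = m + 1 := ⟨n-1, by omega⟩
    have hrec := Yrec G s hG0 hs m
    have hsub : (m+1 : ℕ) - 1 = m := by omega
    rw [hsub]
    have hz1 : z (m+1) = Y G s (m+1) := rfl
    -- rpow bookkeeping
    set Q : ℝ := (2:ℝ)^α with hQ_def
    set P : ℝ := (2:ℝ)^(α*(m:ℝ)) with hP_def
    have hQ0 : 0 < Q := Real.rpow_pos_of_pos two_pos _
    have hP0 : 0 < P := Real.rpow_pos_of_pos two_pos _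
    have eG : G = Q^2 := by
      rw [hG_def, hQ_def, ← Real.rpow_natCast ((2:ℝ)^α) 2,
        ← Real.rpow_mul (by norm_num : (0:ℝ) ≤ 2)]
      congr 1
      push_cast; ring
    have e1 : (2:ℝ)^(α*(((m:ℕ):ℝ)+1)) = P * Q := by
      rw [hP_def, hQ_def, ← Real.rpow_add two_pos]; congr 1; ring
    have e2 : (2:ℝ)^(α*(1-(((m:ℕ):ℝ)+1))) = P⁻¹ := by
      rw [hP_def, ← Real.rpow_neg (by norm_num : (0:ℝ) ≤ 2)]
      congr 1; ring
    have e4 : (2:ℝ)^(α*(1-((m:ℕ):ℝ))) = Q/P := by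
      rw [hP_def, hQ_def, ← Real.rpow_sub two_pos]
      congr 1; ring
    have e5 : (2:ℝ)^(α*(1-(((m:ℕ):ℝ)+1+1))) = P⁻¹ * Q⁻¹ := by
      rw [hP_def, hQ_def, ← Real.rpow_neg (by norm_num : (0:ℝ) ≤ 2),
        ← Real.rpow_neg (by norm_num : (0:ℝ) ≤ 2), ← Real.rpow_add two_pos]
      congr 1; ring
    have e6 : (2:ℝ)^(α*(((m:ℕ):ℝ)+1-1)) = P := by
      rw [hP_def]; congr 1; ring
    push_cast
    rw [e1, e2, e5, e6, e4]
    have hrec' : Y G s (m+2) * Y G s (m+1) = Y G s (m+1) + Q^2 * Y G s m ^ 2 := by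
      rw [← eG]; exact hrec
    have hz2 : z (m+1+1) = Y G s (m+2) := rfl
    have hz0 : z m = Y G s m := rfl
    rw [hz1, hz2, hz0]
    field_simp
    linear_combination hrec' 

end Stmt5
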